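/- Assume that for every y ∈ Y the preimage h^{-1}{y} is a finite indexed set of at most M elements. The value-iteration functions V_k defined by V_0(r, y) = max_i r^i and V_{k+1} = B V_k satisfy, for every k: (i) V_k(r, y) ≤ V_k(r', y) whenever r ≤ r' componentwise, and (ii) V_k(r + 1·c, y) = V_k(r, y) + c for every c ∈ ℝ, where 1 is the all-ones vector. -/

import Mathlib

open scoped BigOperators

noncomputable section

variable {X U W Y : Type*}

/-- The worst-case history `ρ_t(x, y_{0:t-1}, u_{0:t-1})`: the supremum (in `ℝ ∪ {-∞}`,
with `sSup ∅ = ⊥`) of accumulated stage costs over all disturbance sequences and initial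
states whose trajectory reaches `x` at time `t` and is consistent with the measurements. -/
noncomputable def rho (f : X → U → W → X) (h : X → Y) (l : X → U → W → ℝ)
    (t : ℕ) (x : X) (ys : ℕ → Y) (us : ℕ → U) : EReal :=
  sSup { c : EReal | ∃ (xs : ℕ → X) (ws : ℕ → W),
    xs t = x ∧
    (∀ τ < t, xs (τ + 1) = f (xs τ) (us τ) (ws τ)) ∧
    (∀ τ < t, h (xs τ) = ys τ) ∧
    c = ((∑ τ ∈ Finset.range t, l (xs τ) (us τ) (ws τ) : ℝ) : EReal) }

/-- Inputs generated causally by a strategy `π` from a measurement sequence: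
`u_t = μ_t(y_{0:t}, u_{0:t-1})`. -/
noncomputable def inputsOf (π : ℕ → List Y → List U → U) (ys : ℕ → Y) : ℕ → U
  | t => π t ((List.range (t + 1)).map ys) (List.ofFn fun i : Fin t => inputsOf π ys i)
  decreasing_by exact i.isLt

/-- Closed loop: state, list of past measurements and list of past inputs. -/
noncomputable def loop (f : X → U → W → X) (h : X → Y)
    (π : ℕ → List Y → List U → U) (x0 : X) (ws : ℕ → W) : ℕ → X × List Y × List U
  | 0 => (x0, [h x0], [])
  | t + 1 =>
    let p := loop f h π x0 ws t
    let u := π t p.2.1 p.2.2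
    let x' := f p.1 u (ws t)
    (x', p.2.1 ++ [h x'], p.2.2 ++ [u])

/-- Closed-loop state `x_t`. -/
noncomputable def cstate (f : X → U → W → X) (h : X → Y)
    (π : ℕ → List Y → List U → U) (x0 : X) (ws : ℕ → W) (t : ℕ) : X :=
  (loop f h π x0 ws t).1

/-- Closed-loop input `u_t = μ_t(y_{0:t}, u_{0:t-1})`. -/
noncomputable def cinput (f : X → U → W → X) (h : X → Y)
    (π : ℕ → List Y → List U → U) (x0 : X) (ws : ℕ → W) (t : ℕ) : U :=
  π t (loop f h π x0 ws t).2.1 (loop f h π x0 ws t).2.2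

/-- The worst-case `N`-horizon performance `J_π^N(y_0)`. -/
noncomputable def Jcost (f : X → U → W → X) (h : X → Y) (l : X → U → W → ℝ)
    (π : ℕ → List Y → List U → U) (N : ℕ) (y0 : Y) : EReal :=
  sSup { c : EReal | ∃ (x0 : X) (ws : ℕ → W), h x0 = y0 ∧
    c = ((∑ t ∈ Finset.range (N + 1),
      l (cstate f h π x0 ws t) (cinput f h π x0 ws t) (ws t) : ℝ) : EReal) }

/-- The information-state update `g` (componentwise), for preimages of `h`
enumerated by `ξ : Y → Fin M → X`. -/
noncomputable def gup {M : ℕ} (f : X → U → W → X) (l : X → U → W → ℝ)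
    (ξ : Y → Fin M → X) (r : Fin M → EReal) (ynext y : Y) (u : U) : Fin M → EReal :=
  fun i => sSup { c : EReal | ∃ (j : Fin M) (w : W),
    ξ ynext i = f (ξ y j) u w ∧ c = (l (ξ y j) u w : EReal) + r j }

/-- The information state `r_t`, defined recursively by `r_0 = 0` and
`r_t = g(r_{t-1}, y_t, y_{t-1}, u_{t-1})`. -/
noncomputable def rvec {M : ℕ} (f : X → U → W → X) (l : X → U → W → ℝ)
    (ξ : Y → Fin M → X) (ys : ℕ → Y) (us : ℕ → U) : ℕ → Fin M → EReal
  | 0 => 0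
  | t + 1 => gup f l ξ (rvec f l ξ ys us t) (ys (t + 1)) (ys t) (us t)

/-- The Bellman operator `B_u V(r, y) = sup_{v ∈ Y} V(g(r, v, y, u), v)`. -/
noncomputable def Bu {M : ℕ} (f : X → U → W → X) (l : X → U → W → ℝ)
    (ξ : Y → Fin M → X) (V : (Fin M → EReal) → Y → EReal) (u : U)
    (r : Fin M → EReal) (y : Y) : EReal :=
  ⨆ v : Y, V (gup f l ξ r v y u) v

/-- The Bellman operator `B V(r, y) = inf_{u ∈ U} B_u V(r, y)`. -/
noncomputable def Bop {M : ℕ} (f : X → U → W → X) (l : X → U → W → ℝ)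
    (ξ : Y → Fin M → X) (V : (Fin M → EReal) → Y → EReal)
    (r : Fin M → EReal) (y : Y) : EReal :=
  ⨅ u : U, Bu f l ξ V u r y

/-- The value iteration `V_0(r, y) = max_i r^i`, `V_{k+1} = B V_k`. -/
noncomputable def Vseq {M : ℕ} (f : X → U → W → X) (l : X → U → W → ℝ)
    (ξ : Y → Fin M → X) : ℕ → (Fin M → EReal) → Y → EReal
  | 0 => fun r _ => ⨆ i, r i
  | k + 1 => fun r y => Bop f l ξ (Vseq f l ξ k) r y

/-- The (possibly time-varying) information-state feedback policy
`μ_t(y_{0:t}, u_{0:t-1}) = η_t(r_t, y_t)`, where `r_0 = 0` and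
`r_{t+1} = g(r_t, y_{t+1}, y_t, u_t)`. -/
noncomputable def infoStrategyT {M : ℕ} [Nonempty Y] [Nonempty U]
    (f : X → U → W → X) (l : X → U → W → ℝ) (ξ : Y → Fin M → X)
    (η : ℕ → (Fin M → EReal) → Y → U) : ℕ → List Y → List U → U :=
  fun t ysl usl =>
    η t (rvec f l ξ (fun τ => ysl.getD τ (Classical.arbitrary Y))
          (fun τ => usl.getD τ (Classical.arbitrary U)) (ysl.length - 1))
      (ysl.getD (ysl.length - 1) (Classical.arbitrary Y))

/-- Stationary information-state feedback policy `μ_t(y_{0:t}, u_{0:t-1}) = η(r_t, y_t)`. -/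
noncomputable def infoStrategy {M : ℕ} [Nonempty Y] [Nonempty U]
    (f : X → U → W → X) (l : X → U → W → ℝ) (ξ : Y → Fin M → X)
    (η : (Fin M → EReal) → Y → U) : ℕ → List Y → List U → U :=
  infoStrategyT f l ξ (fun _ => η)

end


section Aux

private lemma ereal_add_neg_cancel (c : ℝ) (a : EReal) :
    a + (c : EReal) + ((-c : ℝ) : EReal) = a := by
  induction a using EReal.rec <;> simp
  norm_cast; ring

private noncomputable def erealAddIso (c : ℝ) : EReal ≃o EReal where
  toFun x := x + (c : EReal)
  invFun x := x + ((-c : ℝ) : EReal)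
  left_inv x := ereal_add_neg_cancel c x
  right_inv x := by
    have := ereal_add_neg_cancel (-c) x
    simpa [add_comm] using this
  map_rel_iff' := by
    intro a b
    show a + (c:EReal) ≤ b + (c:EReal) ↔ a ≤ b
    constructor
    · intro hab
      have h := add_le_add_left hab ((-c : ℝ) : EReal)
      rwa [ereal_add_neg_cancel, ereal_add_neg_cancel] at h
    · intro hab; exact add_le_add_left hab _

private lemma ereal_iSup_add {ι : Sort*} (g : ι → EReal) (c : ℝ) :
    (⨆ i, g i + (c : EReal)) = (⨆ i, g i) + (c : EReal) :=
  ((erealAddIso c).map_iSup g).symm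

private lemma ereal_iInf_add {ι : Sort*} (g : ι → EReal) (c : ℝ) :
    (⨅ i, g i + (c : EReal)) = (⨅ i, g i) + (c : EReal) :=
  ((erealAddIso c).map_iInf g).symm

private lemma ereal_sSup_add (S : Set EReal) (c : ℝ) :
    sSup ((fun x => x + (c : EReal)) '' S) = sSup S + (c : EReal) := by
  rw [sSup_image]
  exact ((erealAddIso c).map_sSup S).symm

private lemma gup_mono {X U W Y : Type*} {M : ℕ} (f : X → U → W → X) (l : X → U → W → ℝ)
    (ξ : Y → Fin M → X) {r r' : Fin M → EReal} (hr : r ≤ r') (v y : Y) (u : U) :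
    gup f l ξ r v y u ≤ gup f l ξ r' v y u := by
  intro i
  apply sSup_le
  rintro d ⟨j, w, he, rfl⟩
  exact le_trans (add_le_add_right (hr j) _) (le_sSup ⟨j, w, he, rfl⟩)

private lemma gup_add {X U W Y : Type*} {M : ℕ} (f : X → U → W → X) (l : X → U → W → ℝ)
    (ξ : Y → Fin M → X) (r : Fin M → EReal) (c : ℝ) (v y : Y) (u : U) :
    gup f l ξ (fun i => r i + (c : EReal)) v y u
      = fun i => gup f l ξ r v y u i + (c : EReal) := by
  funext i
  show sSup _ = _
  rw [show {d : EReal | ∃ (j : Fin M) (w : W),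
        ξ v i = f (ξ y j) u w ∧ d = (l (ξ y j) u w : EReal) + (r j + (c : EReal))}
      = (fun x => x + (c : EReal)) '' {d : EReal | ∃ (j : Fin M) (w : W),
        ξ v i = f (ξ y j) u w ∧ d = (l (ξ y j) u w : EReal) + r j} from ?_]
  · exact ereal_sSup_add _ c
  · ext d
    constructor
    · rintro ⟨j, w, he, rfl⟩
      exact ⟨(l (ξ y j) u w : EReal) + r j, ⟨j, w, he, rfl⟩, add_assoc _ _ _⟩
    · rintro ⟨x, ⟨j, w, he, rfl⟩, rfl⟩
      exact ⟨j, w, he, add_assoc _ _ _⟩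

end Aux

/-- Under the finite-preimage assumption, every value-iteration function
`V_k` is (i) monotone in the information state `r` and (ii) equivariant under uniform
translation: `V_k(r + 1·c, y) = V_k(r, y) + c` for every real `c`. -/
theorem Vseq_monotone_translation {X U W Y : Type*} [Nonempty X] [Nonempty U] [Nonempty W]
    [Nonempty Y] {M : ℕ} (f : X → U → W → X) (h : X → Y)
    (hsurj : Function.Surjective h) (l : X → U → W → ℝ) (ξ : Y → Fin M → X)
    (hξ : ∀ y : Y, Set.range (ξ y) = {x : X | h x = y}) (k : ℕ) :
    (∀ (r r' : Fin M → EReal) (y : Y), r ≤ r' → Vseq f l ξ k r y ≤ Vseq f l ξ k r' y) ∧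
    (∀ (r : Fin M → EReal) (y : Y) (c : ℝ),
      Vseq f l ξ k (fun i => r i + (c : EReal)) y = Vseq f l ξ k r y + (c : EReal)) := by
  induction k with
  | zero =>
      constructor
      · intro r r' y hr
        exact iSup_mono hr
      · intro r y c
        exact ereal_iSup_add r c
  | succ k ih =>
      constructor
      · intro r r' y hr
        refine iInf_mono fun u => iSup_mono fun v => ?_
        exact ih.1 _ _ v (gup_mono f l ξ hr v y u)
      · intro r y c
        show Bop f l ξ (Vseq f l ξ k) _ y = Bop f l ξ (Vseq f l ξ k) r y + (c : EReal)
        unfold Bop Bu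
        rw [← ereal_iInf_add]
        refine iInf_congr fun u => ?_
        rw [← ereal_iSup_add]
        refine iSup_congr fun v => ?_
        rw [gup_add f l ξ r c v y u]
        exact ih.2 (gup f l ξ r v y u) v c
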